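/- Let π* be α-optimal in a finite discounted MDP, so Q^{π*}(s,a) = α log π*(a|s) + V^{π*}(s). For any policy π, the negative regret −Reg(s,a) := Q^{π}(s,a) − V^{π*}(s) decomposes as −Reg(s,a) = α·( log π*(a|s) − D̄(π‖π*; s,a) ), where D̄ is the sequential forward KL divergence. In particular, the regret does not depend on the choice of reward within the (α,π*)-equivalence class (i.e., it is invariant under the transformation β(s)). -/

import Mathlib

open Finset

variable {S A : Type*}

/-- A policy: for each state, a probability distribution over actions. -/
def IsPolicy [Fintype A] (π : S → A → ℝ) : Prop :=
  (∀ s a, 0 ≤ π s a) ∧ ∀ s, ∑ a, π s a = 1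

/-- A transition kernel: for each state-action pair, a distribution over next states. -/
def IsKernel [Fintype S] (P : S → A → S → ℝ) : Prop :=
  (∀ s a s', 0 ≤ P s a s') ∧ ∀ s a, ∑ s', P s a s' = 1

/-- Shannon entropy of a finitely supported distribution. -/
noncomputable def entH [Fintype A] (p : A → ℝ) : ℝ := -∑ a, p a * Real.log (p a)

/-- Kullback–Leibler divergence on a finite set. -/
noncomputable def KLdiv [Fintype A] (p q : A → ℝ) : ℝ := ∑ a, p a * Real.log (p a / q a)

/-- Soft (log-sum-exp) value of a Q-function at a state. -/
noncomputable def softV [Fintype A] (α : ℝ) (Q : S → A → ℝ) (s : S) : ℝ :=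
  α * Real.log (∑ a, Real.exp (Q s a / α))

/-- Q satisfies the soft Bellman equation for policy π under reward r. -/
def IsSoftQ [Fintype S] [Fintype A] (P : S → A → S → ℝ) (r : S → A → ℝ) (γ α : ℝ)
    (π : S → A → ℝ) (Q : S → A → ℝ) : Prop :=
  ∀ s a, Q s a = r s a + γ * ∑ s', P s a s' *
    ((∑ a', π s' a' * Q s' a') + α * entH (π s'))

/-- π is the softmax (α-optimal) policy of the soft Q-function Q. -/
def IsAlphaOptimal [Fintype A] (α : ℝ) (π : S → A → ℝ) (Q : S → A → ℝ) : Prop :=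
  ∀ s a, π s a = Real.exp ((Q s a - softV α Q s) / α)

/-- `EKL P π πstar n s a` = expected KL divergence `D_KL(π(·|s_{n+1}) ‖ πstar(·|s_{n+1}))`
at time `n+1` along a π-trajectory started at `(s_0, a_0) = (s, a)`. -/
noncomputable def EKL [Fintype S] [Fintype A] (P : S → A → S → ℝ)
    (π πstar : S → A → ℝ) : ℕ → S → A → ℝ
  | 0 => fun s a => ∑ s', P s a s' * KLdiv (π s') (πstar s')
  | (n+1) => fun s a => ∑ s', P s a s' * ∑ a', π s' a' * EKL P π πstar n s' a'

/-- Sequential forward KL divergence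
`D̄(π‖πstar; s,a) = Σ_{t≥1} γ^t E[D_KL(π(·|s_t)‖πstar(·|s_t))]`. -/
noncomputable def seqKL [Fintype S] [Fintype A] (P : S → A → S → ℝ)
    (π πstar : S → A → ℝ) (γ : ℝ) (s : S) (a : A) : ℝ :=
  ∑' n : ℕ, γ ^ (n + 1) * EKL P π πstar n s a

/-- `stateDist P π n s a x` = probability of being at state `x` at time `n+1` along a
π-trajectory started at `(s_0, a_0) = (s, a)`. -/
noncomputable def stateDist [Fintype S] [Fintype A] (P : S → A → S → ℝ)
    (π : S → A → ℝ) : ℕ → S → A → S → ℝ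
  | 0 => fun s a x => P s a x
  | (n+1) => fun s a x => ∑ s', stateDist P π n s a s' * ∑ a', π s' a' * P s' a' x

/-- One-step expectation operator along a π-trajectory. -/
noncomputable def Texp [Fintype S] [Fintype A] (P : S → A → S → ℝ) (π : S → A → ℝ)
    (f : S → A → ℝ) : S → A → ℝ :=
  fun s a => ∑ s', P s a s' * ∑ a', π s' a' * f s' a'

lemma avg_abs_le {B : Type*} [Fintype B] {p g : B → ℝ} {M : ℝ} (hp : ∀ b, 0 ≤ p b)
    (hp1 : ∑ b, p b = 1) (hg : ∀ b, |g b| ≤ M) : |∑ b, p b * g b| ≤ M := by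
  calc |∑ b, p b * g b| ≤ ∑ b, |p b * g b| := Finset.abs_sum_le_sum_abs _ _
    _ ≤ ∑ b, p b * M := Finset.sum_le_sum fun b _ => by
        rw [abs_mul, abs_of_nonneg (hp b)]
        exact mul_le_mul_of_nonneg_left (hg b) (hp b)
    _ = M := by rw [← Finset.sum_mul, hp1, one_mul]

lemma Texp_abs_le [Fintype S] [Fintype A] {P : S → A → S → ℝ} {π : S → A → ℝ}
    (hP : IsKernel P) (hπ : IsPolicy π) {f : S → A → ℝ} {M : ℝ}
    (hf : ∀ s a, |f s a| ≤ M) : ∀ s a, |Texp P π f s a| ≤ M := by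
  intro s a
  exact avg_abs_le (hP.1 s a) (hP.2 s a)
    (fun s' => avg_abs_le (hπ.1 s') (hπ.2 s') (fun a' => hf s' a'))

lemma Texp_comb [Fintype S] [Fintype A] (P : S → A → S → ℝ) (π : S → A → ℝ)
    {f g h : S → A → ℝ} {b c : ℝ} (hfg : ∀ s a, f s a = b * g s a + c * h s a) :
    ∀ s a, Texp P π f s a = b * Texp P π g s a + c * Texp P π h s a := by
  intro s a
  have h1 : ∀ s', ∑ a', π s' a' * f s' a'
      = b * (∑ a', π s' a' * g s' a') + c * (∑ a', π s' a' * h s' a') := by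
    intro s'
    rw [Finset.mul_sum, Finset.mul_sum, ← Finset.sum_add_distrib]
    exact Finset.sum_congr rfl fun a' _ => by rw [hfg]; ring
  simp only [Texp, h1]
  rw [Finset.mul_sum, Finset.mul_sum, ← Finset.sum_add_distrib]
  exact Finset.sum_congr rfl fun s' _ => by ring

lemma EKL_eq_iterate [Fintype S] [Fintype A] (P : S → A → S → ℝ)
    (π πstar : S → A → ℝ) (n : ℕ) :
    EKL P π πstar n = (Texp P π)^[n] (EKL P π πstar 0) := by
  induction n with
  | zero => rfl
  | succ n ih =>
    rw [Function.iterate_succ_apply', ← ih]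
    rfl

theorem stmt8 [Fintype S] [Fintype A] [Nonempty A]
    (P : S → A → S → ℝ) (hP : IsKernel P)
    (r : S → A → ℝ) (γ α : ℝ) (hγ0 : 0 ≤ γ) (hγ1 : γ < 1) (hα : 0 < α)
    (πstar π : S → A → ℝ) (hπstar : IsPolicy πstar) (hπ : IsPolicy π)
    (hsupp : ∀ s a, 0 < π s a → 0 < πstar s a)
    (Qstar : S → A → ℝ) (hQstar : IsSoftQ P r γ α πstar Qstar)
    (hopt : IsAlphaOptimal α πstar Qstar)
    (Qπ : S → A → ℝ) (hQπ : IsSoftQ P r γ α π Qπ) :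
    ∀ s a, Qπ s a - softV α Qstar s =
      α * (Real.log (πstar s a) - seqKL P π πstar γ s a) := by
  intro s a
  -- πstar is everywhere positive
  have hπspos : ∀ s a, 0 < πstar s a := fun s a => by
    rw [hopt s a]; exact Real.exp_pos _
  have hkey : ∀ s a, Qstar s a = α * Real.log (πstar s a) + softV α Qstar s := by
    intro s a
    rw [hopt s a, Real.log_exp]
    field_simp
    ring
  set D : S → A → ℝ := fun s a => Qstar s a - Qπ s a with hD
  have hDdef : ∀ s a, D s a = Qstar s a - Qπ s a := fun _ _ => rfl
  -- KL rewrite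
  have klrw : ∀ s', KLdiv (π s') (πstar s')
      = ∑ a', π s' a' * (Real.log (π s' a') - Real.log (πstar s' a')) := by
    intro s'
    unfold KLdiv
    refine Finset.sum_congr rfl fun a' _ => ?_
    rcases eq_or_lt_of_le (hπ.1 s' a') with h | h
    · rw [← h]; simp
    · rw [Real.log_div (ne_of_gt h) (ne_of_gt (hπspos s' a'))]
  have expand : ∀ (ρ : S → A → ℝ), IsPolicy ρ → ∀ s',
      (∑ a', ρ s' a' * Qstar s' a')
        = α * (∑ a', ρ s' a' * Real.log (πstar s' a')) + softV α Qstar s' := by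
    intro ρ hρ s'
    calc (∑ a', ρ s' a' * Qstar s' a')
        = ∑ a', (α * (ρ s' a' * Real.log (πstar s' a')) + ρ s' a' * softV α Qstar s') :=
          Finset.sum_congr rfl fun a' _ => by rw [hkey s' a']; ring
      _ = α * (∑ a', ρ s' a' * Real.log (πstar s' a')) + (∑ a', ρ s' a') * softV α Qstar s' := by
          rw [Finset.sum_add_distrib, ← Finset.mul_sum, Finset.sum_mul]
      _ = α * (∑ a', ρ s' a' * Real.log (πstar s' a')) + softV α Qstar s' := by
          rw [hρ.2 s', one_mul]
  have fact1 : ∀ s', (∑ a', πstar s' a' * Qstar s' a') + α * entH (πstar s')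
      = softV α Qstar s' := by
    intro s'
    rw [expand πstar hπstar s']
    unfold entH
    ring
  have fact2 : ∀ s', (∑ a', π s' a' * Qstar s' a') + α * entH (π s')
      = softV α Qstar s' - α * KLdiv (π s') (πstar s') := by
    intro s'
    rw [expand π hπ s', klrw s']
    have h2 : ∑ a', π s' a' * (Real.log (π s' a') - Real.log (πstar s' a'))
        = (∑ a', π s' a' * Real.log (π s' a')) - ∑ a', π s' a' * Real.log (πstar s' a') := by
      rw [← Finset.sum_sub_distrib]
      exact Finset.sum_congr rfl fun a' _ => by ring
    rw [h2]
    unfold entH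
    ring
  -- one-step recursion for D
  have rec0 : ∀ s a, D s a = γ * α * EKL P π πstar 0 s a + γ * Texp P π D s a := by
    intro s a
    have inner : ∀ s',
        ((∑ a', πstar s' a' * Qstar s' a') + α * entH (πstar s'))
          - ((∑ a', π s' a' * Qπ s' a') + α * entH (π s'))
        = α * KLdiv (π s') (πstar s') + ∑ a', π s' a' * D s' a' := by
      intro s'
      have hsub : (∑ a', π s' a' * Qπ s' a')
          = (∑ a', π s' a' * Qstar s' a') - ∑ a', π s' a' * D s' a' := by
        rw [← Finset.sum_sub_distrib]
        exact Finset.sum_congr rfl fun a' _ => by rw [hDdef]; ring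
      rw [fact1 s', hsub]
      linarith [fact2 s']
    have hb : D s a = γ * ∑ s', P s a s' *
        (((∑ a', πstar s' a' * Qstar s' a') + α * entH (πstar s'))
          - ((∑ a', π s' a' * Qπ s' a') + α * entH (π s'))) := by
      rw [hDdef, hQstar s a, hQπ s a]
      have hsplit0 : ∑ s', P s a s' *
          (((∑ a', πstar s' a' * Qstar s' a') + α * entH (πstar s'))
            - ((∑ a', π s' a' * Qπ s' a') + α * entH (π s')))
          = (∑ s', P s a s' * ((∑ a', πstar s' a' * Qstar s' a') + α * entH (πstar s')))
            - ∑ s', P s a s' * ((∑ a', π s' a' * Qπ s' a') + α * entH (π s')) := by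
        rw [← Finset.sum_sub_distrib]
        exact Finset.sum_congr rfl fun s' _ => mul_sub _ _ _
      rw [hsplit0]
      ring
    rw [hb]
    have hsplit : ∑ s', P s a s' *
        (((∑ a', πstar s' a' * Qstar s' a') + α * entH (πstar s'))
          - ((∑ a', π s' a' * Qπ s' a') + α * entH (π s')))
        = α * EKL P π πstar 0 s a + Texp P π D s a := by
      have h1 : ∀ s' ∈ Finset.univ, P s a s' *
          (((∑ a', πstar s' a' * Qstar s' a') + α * entH (πstar s'))
            - ((∑ a', π s' a' * Qπ s' a') + α * entH (π s')))
          = α * (P s a s' * KLdiv (π s') (πstar s'))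
            + P s a s' * ∑ a', π s' a' * D s' a' := by
        intro s' _
        rw [inner s']
        ring
      rw [Finset.sum_congr rfl h1, Finset.sum_add_distrib, ← Finset.mul_sum]
      rfl
    rw [hsplit]
    ring
  -- iterated recursion
  have recN : ∀ N, ∀ s a, (Texp P π)^[N] D s a
      = γ * α * EKL P π πstar N s a + γ * (Texp P π)^[N+1] D s a := by
    intro N
    induction N with
    | zero => simpa using rec0
    | succ N ih =>
      intro s a
      simp only [Function.iterate_succ_apply'] at ih ⊢
      rw [Texp_comb P π (b := γ * α) (c := γ) ih s a]
      rw [show EKL P π πstar (N+1) = Texp P π (EKL P π πstar N) from rfl]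
  -- telescoping
  have tele : ∀ N, D s a
      = α * (∑ n ∈ Finset.range N, γ ^ (n+1) * EKL P π πstar n s a)
        + γ ^ N * (Texp P π)^[N] D s a := by
    intro N
    induction N with
    | zero => simp
    | succ N ih =>
      rw [Finset.sum_range_succ]
      calc D s a
          = α * (∑ n ∈ Finset.range N, γ ^ (n+1) * EKL P π πstar n s a)
            + γ ^ N * (Texp P π)^[N] D s a := ih
        _ = α * (∑ n ∈ Finset.range N, γ ^ (n+1) * EKL P π πstar n s a)
            + γ ^ N * (γ * α * EKL P π πstar N s a + γ * (Texp P π)^[N+1] D s a) := by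
            rw [recN N s a]
        _ = α * ((∑ n ∈ Finset.range N, γ ^ (n+1) * EKL P π πstar n s a)
            + γ ^ (N+1) * EKL P π πstar N s a) + γ ^ (N+1) * (Texp P π)^[N+1] D s a := by
            ring
  -- bounds
  set M : ℝ := ∑ x : S, ∑ y : A, |D x y| with hMdef
  have hM : ∀ s a, |D s a| ≤ M := by
    intro s a
    have h1 : |D s a| ≤ ∑ y : A, |D s y| :=
      Finset.single_le_sum (f := fun y => |D s y|) (fun y _ => abs_nonneg _) (Finset.mem_univ a)
    exact h1.trans (Finset.single_le_sum (f := fun x => ∑ y : A, |D x y|)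
      (fun x _ => Finset.sum_nonneg fun y _ => abs_nonneg _) (Finset.mem_univ s))
  have hMN : ∀ N s a, |(Texp P π)^[N] D s a| ≤ M := by
    intro N
    induction N with
    | zero => exact hM
    | succ N ih =>
      intro s a
      rw [Function.iterate_succ_apply']
      exact Texp_abs_le hP hπ ih s a
  set MK : ℝ := ∑ x : S, ∑ y : A, |EKL P π πstar 0 x y| with hMKdef
  have hMK0 : ∀ s a, |EKL P π πstar 0 s a| ≤ MK := by
    intro s a
    have h1 : |EKL P π πstar 0 s a| ≤ ∑ y : A, |EKL P π πstar 0 s y| :=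
      Finset.single_le_sum (f := fun y => |EKL P π πstar 0 s y|) (fun y _ => abs_nonneg _)
        (Finset.mem_univ a)
    exact h1.trans (Finset.single_le_sum (f := fun x => ∑ y : A, |EKL P π πstar 0 x y|)
      (fun x _ => Finset.sum_nonneg fun y _ => abs_nonneg _) (Finset.mem_univ s))
  have hMKit : ∀ n s a, |(Texp P π)^[n] (EKL P π πstar 0) s a| ≤ MK := by
    intro n
    induction n with
    | zero => exact hMK0
    | succ n ih =>
      intro s a
      rw [Function.iterate_succ_apply']
      exact Texp_abs_le hP hπ ih s a
  have hMK : ∀ n s a, |EKL P π πstar n s a| ≤ MK := by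
    intro n s a
    rw [EKL_eq_iterate]
    exact hMKit n s a
  -- summability
  have hsum : Summable (fun n => γ ^ (n+1) * EKL P π πstar n s a) := by
    apply Summable.of_norm_bounded
      ((summable_geometric_of_lt_one hγ0 hγ1).mul_left (MK * γ))
    intro n
    rw [Real.norm_eq_abs, abs_mul, abs_of_nonneg (pow_nonneg hγ0 _), pow_succ]
    calc γ ^ n * γ * |EKL P π πstar n s a| ≤ γ ^ n * γ * MK := by
          apply mul_le_mul_of_nonneg_left (hMK n s a)
          positivity
      _ = MK * γ * γ ^ n := by ring
  -- tail goes to zero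
  have hzero : Filter.Tendsto (fun N => γ ^ N * (Texp P π)^[N] D s a)
      Filter.atTop (nhds 0) := by
    refine squeeze_zero_norm (a := fun N => M * γ ^ N) (fun N => ?_) ?_
    · rw [Real.norm_eq_abs, abs_mul, abs_of_nonneg (pow_nonneg hγ0 _)]
      calc γ ^ N * |(Texp P π)^[N] D s a| ≤ γ ^ N * M := by
            apply mul_le_mul_of_nonneg_left (hMN N s a)
            positivity
        _ = M * γ ^ N := mul_comm _ _
    · simpa using (tendsto_pow_atTop_nhds_zero_of_lt_one hγ0 hγ1).const_mul M
  -- partial sums converge to D / α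
  have hpartial : Filter.Tendsto
      (fun N => ∑ n ∈ Finset.range N, γ ^ (n+1) * EKL P π πstar n s a)
      Filter.atTop (nhds (D s a / α)) := by
    have heq : ∀ N, ∑ n ∈ Finset.range N, γ ^ (n+1) * EKL P π πstar n s a
        = (D s a - γ ^ N * (Texp P π)^[N] D s a) / α := by
      intro N
      have := tele N
      field_simp
      linarith
    have h2 : Filter.Tendsto (fun N => (D s a - γ ^ N * (Texp P π)^[N] D s a) / α)
        Filter.atTop (nhds ((D s a - 0) / α)) :=
      (tendsto_const_nhds.sub hzero).div_const α
    rw [sub_zero] at h2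
    exact h2.congr fun N => (heq N).symm
  have hhs : HasSum (fun n => γ ^ (n+1) * EKL P π πstar n s a) (D s a / α) :=
    hsum.hasSum_iff_tendsto_nat.2 hpartial
  have hseq : seqKL P π πstar γ s a = D s a / α := hhs.tsum_eq
  -- conclusion
  have hmain : α * (Real.log (πstar s a) - seqKL P π πstar γ s a)
      = α * Real.log (πstar s a) - D s a := by
    rw [hseq]
    field_simp
  rw [hmain]
  have := hkey s a
  have hd := hDdef s a
  linarith
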